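/- Let 𝕂 ∈ {ℝ, ℂ} and let X be a nonzero normed space over 𝕂. Let 𝒻 denote the family of finite subsets of ℕ directed by inclusion, and for a sequence (x_n)_{n∈ℕ} in X and F ∈ 𝒻 set x_F := ∑_{n∈F} x_n. Then the set of all sequences (x_n)_{n∈ℕ} in X such that the series ∑_{n=1}^∞ x_n converges (i.e., the sequence of partial sums ∑_{n≤N} x_n converges in X as N → ∞) but the net (x_F)_{F∈𝒻} diverges (i.e., there is no x ∈ X with lim_{F∈𝒻} x_F = x; equivalently, the family (x_n) is not summable), is 𝔠-lineable as a subset of the vector space X^ℕ. -/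

import Mathlib

open Cardinal Filter Topology

universe u

section aux

variable {𝕜 : Type} [RCLike 𝕜]

private lemma aux_base (n : ℕ) : (0:ℝ) < (n:ℝ)+1 := by positivity

private lemma aux_tendsto_rpow {s : ℝ} (hs : s < 0) :
    Tendsto (fun n : ℕ => ((n:ℝ)+1) ^ s) atTop (𝓝 0) := by
  have h1 : Tendsto (fun n : ℕ => (n:ℝ)+1) atTop atTop :=
    tendsto_atTop_add_const_right _ 1 tendsto_natCast_atTop_atTop
  have h2 := (tendsto_rpow_neg_atTop (neg_pos.mpr hs)).comp h1
  simpa [Function.comp_def, neg_neg] using h2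

private lemma aux_key (T : Finset ℝ) (c : ℝ → 𝕜) (t₀ : ℝ) (ht₀ : t₀ ∈ T)
    (hmin : ∀ t ∈ T, t ≠ t₀ → t₀ < t) :
    Tendsto (fun n : ℕ =>
        (∑ t ∈ T, c t * ((((n:ℝ)+1) ^ (-t) : ℝ) : 𝕜)) * ((((n:ℝ)+1) ^ t₀ : ℝ) : 𝕜))
      atTop (𝓝 (c t₀)) := by
  have hre : ∀ n : ℕ,
      (∑ t ∈ T, c t * ((((n:ℝ)+1) ^ (-t) : ℝ) : 𝕜)) * ((((n:ℝ)+1) ^ t₀ : ℝ) : 𝕜)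
        = ∑ t ∈ T, c t * ((((n:ℝ)+1) ^ (-t + t₀) : ℝ) : 𝕜) := by
    intro n
    rw [Finset.sum_mul]
    refine Finset.sum_congr rfl fun t ht => ?_
    rw [mul_assoc, ← RCLike.ofReal_mul, ← Real.rpow_add (aux_base n)]
  have hlim : (c t₀) = ∑ t ∈ T, (if t = t₀ then c t₀ else 0) := by
    rw [Finset.sum_ite_eq' T t₀ (fun _ => c t₀), if_pos ht₀]
  simp only [hre]
  rw [hlim]
  refine tendsto_finset_sum _ fun t ht => ?_
  by_cases h : t = t₀
  · subst h
    simp only [if_pos rfl, neg_add_cancel, Real.rpow_zero, RCLike.ofReal_one, mul_one]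
    exact tendsto_const_nhds
  · rw [if_neg h]
    have h0 : -t + t₀ < 0 := by have := hmin t ht h; linarith
    have h2 := ((RCLike.continuous_ofReal (K := 𝕜)).tendsto 0).comp (aux_tendsto_rpow h0)
    simpa using h2.const_mul (c t)

private lemma aux_exists_ne (T : Finset ℝ) (c : ℝ → 𝕜) (hne : T.Nonempty)
    (hc : ∀ t ∈ T, c t ≠ 0) :
    ∃ n : ℕ, (∑ t ∈ T, c t * ((((n:ℝ)+1) ^ (-t) : ℝ) : 𝕜)) ≠ 0 := by
  by_contra h
  push_neg at h
  have hmin : ∀ t ∈ T, t ≠ T.min' hne → T.min' hne < t := fun t ht hne' =>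
    lt_of_le_of_ne (T.min'_le t ht) (Ne.symm hne')
  have hkey := aux_key T c (T.min' hne) (T.min'_mem hne) hmin
  have h0 : Tendsto (fun _ : ℕ => (0:𝕜)) atTop (𝓝 (c (T.min' hne))) := by
    refine hkey.congr fun n => ?_
    rw [h n, zero_mul]
  exact hc _ (T.min'_mem hne) (tendsto_nhds_unique h0 tendsto_const_nhds)

private lemma aux_not_summable_norm (T : Finset ℝ) (hTS : ↑T ⊆ Set.Ioo (1/2:ℝ) 1)
    (c : ℝ → 𝕜) (hne : T.Nonempty) (hc : ∀ t ∈ T, c t ≠ 0) :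
    ¬ Summable (fun n : ℕ => ‖∑ t ∈ T, c t * ((((n:ℝ)+1) ^ (-t) : ℝ) : 𝕜)‖) := by
  intro hs
  set t₀ := T.min' hne with ht₀def
  have ht₀T : t₀ ∈ T := T.min'_mem hne
  have ht₀1 : t₀ ≤ 1 := le_of_lt (hTS ht₀T).2
  have hmin : ∀ t ∈ T, t ≠ t₀ → t₀ < t := fun t ht hne' =>
    lt_of_le_of_ne (T.min'_le t ht) (Ne.symm hne')
  have hkey := aux_key T c t₀ ht₀T hmin
  have hpos : 0 < ‖c t₀‖ := norm_pos_iff.mpr (hc t₀ ht₀T)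
  set C : ℝ := ‖c t₀‖ / 2 with hCdef
  have hCpos : 0 < C := by positivity
  have hev : ∀ᶠ n : ℕ in atTop,
      C ≤ ‖(∑ t ∈ T, c t * ((((n:ℝ)+1) ^ (-t) : ℝ) : 𝕜)) * ((((n:ℝ)+1) ^ t₀ : ℝ) : 𝕜)‖ :=
    hkey.norm.eventually_const_le (by simpa [hCdef] using half_lt_self hpos)
  have hev2 : ∀ᶠ n : ℕ in atTop,
      C / ((n:ℝ)+1) ≤ ‖∑ t ∈ T, c t * ((((n:ℝ)+1) ^ (-t) : ℝ) : 𝕜)‖ := by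
    filter_upwards [hev] with n hn
    have hrpos : (0:ℝ) < ((n:ℝ)+1) ^ t₀ := Real.rpow_pos_of_pos (aux_base n) t₀
    rw [norm_mul, RCLike.norm_ofReal, abs_of_nonneg hrpos.le] at hn
    have hb : ((n:ℝ)+1) ^ t₀ ≤ (n:ℝ)+1 := by
      calc ((n:ℝ)+1) ^ t₀ ≤ ((n:ℝ)+1) ^ (1:ℝ) :=
            Real.rpow_le_rpow_of_exponent_le (by simp) ht₀1
        _ = (n:ℝ)+1 := Real.rpow_one _
    calc C / ((n:ℝ)+1) ≤ C / (((n:ℝ)+1) ^ t₀) := by gcongr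
      _ ≤ ‖∑ t ∈ T, c t * ((((n:ℝ)+1) ^ (-t) : ℝ) : 𝕜)‖ := by
          rw [div_le_iff₀ hrpos]; exact hn
  have hsum2 : Summable (fun n : ℕ => C / ((n:ℝ)+1)) := by
    refine Summable.of_norm_bounded_eventually_nat hs ?_
    filter_upwards [hev2] with n hn
    rwa [Real.norm_eq_abs, abs_of_nonneg (by positivity)]
  have hsum3 : Summable (fun n : ℕ => ((n:ℝ)+1)⁻¹) := by
    have := (summable_mul_left_iff (a := C) (ne_of_gt hCpos)).mp
      (hsum2.congr fun n => by rw [div_eq_mul_inv])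
    exact this
  have hsum4 : Summable (fun n : ℕ => ((n+1 : ℕ) : ℝ)⁻¹) := by
    refine hsum3.congr fun n => ?_
    push_cast; ring_nf
  exact Real.not_summable_natCast_inv ((_root_.summable_nat_add_iff 1).mp hsum4)

private lemma aux_alt {t : ℝ} (ht : 0 < t) :
    ∃ l : ℝ, Tendsto (fun N : ℕ => ∑ n ∈ Finset.range N, (-1:ℝ)^n * ((n:ℝ)+1)^(-t))
      atTop (𝓝 l) := by
  apply Antitone.tendsto_alternating_series_of_tendsto_zero
  · intro m n hmn
    show ((n:ℝ)+1) ^ (-t) ≤ ((m:ℝ)+1) ^ (-t)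
    rw [Real.rpow_neg (aux_base n).le, Real.rpow_neg (aux_base m).le]
    have hmn' : (m:ℝ)+1 ≤ (n:ℝ)+1 := by
      have : (m:ℝ) ≤ (n:ℝ) := Nat.cast_le.mpr hmn
      linarith
    have h1 : ((m:ℝ)+1) ^ t ≤ ((n:ℝ)+1) ^ t :=
      Real.rpow_le_rpow (aux_base m).le hmn' ht.le
    exact inv_anti₀ (Real.rpow_pos_of_pos (aux_base m) t) h1
  · exact aux_tendsto_rpow (neg_neg_iff_pos.mpr ht)

end aux

private noncomputable def Lalt (t : ℝ) : ℝ :=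
  if h : 0 < t then (aux_alt h).choose else 0

private lemma Lalt_spec {t : ℝ} (ht : 0 < t) :
    Tendsto (fun N : ℕ => ∑ n ∈ Finset.range N, (-1:ℝ)^n * ((n:ℝ)+1)^(-t))
      atTop (𝓝 (Lalt t)) := by
  rw [Lalt, dif_pos ht]; exact (aux_alt ht).choose_spec

section main

variable (𝕜 : Type) [RCLike 𝕜] {X : Type u} [NormedAddCommGroup X] [NormedSpace 𝕜 X]

private noncomputable def Fseq (e : X) (t : ℝ) : ℕ → X :=
  fun n => ((-1:𝕜)^n * ((((n:ℝ)+1) ^ (-t) : ℝ) : 𝕜)) • e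

private lemma Fseq_sum_apply (e : X) (T : Finset ℝ) (c : ℝ → 𝕜) (n : ℕ) :
    (∑ t ∈ T, c t • Fseq 𝕜 e t) n
      = ((-1:𝕜)^n * ∑ t ∈ T, c t * ((((n:ℝ)+1) ^ (-t) : ℝ) : 𝕜)) • e := by
  rw [Finset.sum_apply, Finset.mul_sum, Finset.sum_smul]
  refine Finset.sum_congr rfl fun t ht => ?_
  rw [Pi.smul_apply, Fseq, smul_smul]
  congr 1
  ring

private lemma Fseq_partial (e : X) (T : Finset ℝ) (c : ℝ → 𝕜) (N : ℕ) :
    ∑ n ∈ Finset.range N, (∑ t ∈ T, c t • Fseq 𝕜 e t) n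
      = ∑ t ∈ T, (c t * ((∑ n ∈ Finset.range N, (-1:ℝ)^n * ((n:ℝ)+1)^(-t) : ℝ) : 𝕜)) • e := by
  simp only [Fseq_sum_apply]
  rw [← Finset.sum_smul, ← Finset.sum_smul]
  congr 1
  simp only [Finset.mul_sum]
  rw [Finset.sum_comm]
  refine Finset.sum_congr rfl fun t ht => ?_
  rw [RCLike.ofReal_sum, Finset.mul_sum]
  refine Finset.sum_congr rfl fun n hn => ?_
  push_cast
  ring

end main

/-- Let `𝕜 ∈ {ℝ, ℂ}` and let `X` be a nonzero normed space over `𝕜`.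
The set of all sequences `(x n)_{n ∈ ℕ}` in `X` such that the series `∑ x n` converges
(the partial sums converge in `X`) but the net `(∑_{n ∈ F} x n)_{F ∈ 𝒻}`, indexed by the
finite subsets of `ℕ` directed by inclusion, diverges (equivalently, the family `(x n)` is
not summable), is `𝔠`-lineable in `X ^ ℕ`.  (Convergence of the net `F ↦ ∑_{n ∈ F} x n`
to `s` is exactly `HasSum x s`, so divergence of the net is `¬ Summable x`.) -/
theorem statement5 (𝕜 : Type) [RCLike 𝕜] (X : Type u)
    [NormedAddCommGroup X] [NormedSpace 𝕜 X] [Nontrivial X] :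
    ∃ W : Submodule 𝕜 (ℕ → X),
      Module.rank 𝕜 ↥W = Cardinal.lift.{u} Cardinal.continuum ∧
      ∀ x ∈ W, x ≠ 0 →
        (∃ s : X, Filter.Tendsto (fun N : ℕ => ∑ n ∈ Finset.range N, x n)
          Filter.atTop (nhds s)) ∧
        ¬ Summable x := by
  obtain ⟨e, he⟩ := exists_ne (0 : X)
  obtain ⟨φ, hφ1, hφe⟩ := exists_dual_vector 𝕜 e (norm_ne_zero_iff.mpr he)
  set S : Set ℝ := Set.Ioo (1/2 : ℝ) 1 with hSdef
  refine ⟨Submodule.span 𝕜 (Fseq 𝕜 e '' S), ?_, ?_⟩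
  · -- rank
    have hind : LinearIndependent 𝕜 (Fseq 𝕜 e ∘ ((↑) : S → ℝ)) := by
      rw [linearIndependent_comp_subtype_iff, linearIndepOn_iff]
      intro l hl hl0
      by_contra hlne
      have hsupp : l.support.Nonempty := Finsupp.support_nonempty_iff.mpr hlne
      have hz : ∀ n : ℕ, (∑ t ∈ l.support, l t * ((((n:ℝ)+1) ^ (-t) : ℝ) : 𝕜)) = 0 := by
        intro n
        have h1 : (Finsupp.linearCombination 𝕜 (Fseq 𝕜 e)) l n = (0 : X) := by
          rw [hl0]; rfl
        rw [Finsupp.linearCombination_apply, Finsupp.sum, Fseq_sum_apply] at h1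
        rcases smul_eq_zero.mp h1 with h2 | h2
        · rcases mul_eq_zero.mp h2 with h3 | h3
          · exact absurd h3 (by simp)
          · exact h3
        · exact absurd h2 he
      obtain ⟨n, hn⟩ := aux_exists_ne l.support l hsupp
        (fun t ht => Finsupp.mem_support_iff.mp ht)
      exact hn (hz n)
    have hinj : Set.InjOn (Fseq 𝕜 e) S := by
      intro a ha b hb hab
      have := hind.injective (a₁ := ⟨a, ha⟩) (a₂ := ⟨b, hb⟩) hab
      exact Subtype.mk_eq_mk.mp this
    have hset : LinearIndependent 𝕜 (fun x : (Fseq 𝕜 e '' S) => (x : ℕ → X)) :=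
      LinearIndepOn.id_image hind
    rw [rank_span_set hset]
    have h1 := Cardinal.mk_image_eq_of_injOn_lift (Fseq 𝕜 e) S hinj
    rw [Cardinal.lift_uzero] at h1
    have h2 : #↥S = Cardinal.continuum := Cardinal.mk_Ioo_real (by norm_num)
    rw [h1, h2]
    simp [Cardinal.lift_continuum]
  · -- main property
    intro x hx hxne
    obtain ⟨l, hlsupp, hlx⟩ := (Finsupp.mem_span_image_iff_linearCombination 𝕜).mp hx
    rw [Finsupp.mem_supported] at hlsupp
    have hxrep : x = ∑ t ∈ l.support, l t • Fseq 𝕜 e t := by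
      rw [← hlx, Finsupp.linearCombination_apply, Finsupp.sum]
    have hlne : l ≠ 0 := by
      rintro rfl
      apply hxne
      rw [hxrep]; simp
    have hsupp : l.support.Nonempty := Finsupp.support_nonempty_iff.mpr hlne
    have hcs : ∀ t ∈ l.support, l t ≠ 0 := fun t ht => Finsupp.mem_support_iff.mp ht
    have hpos : ∀ t ∈ l.support, (0:ℝ) < t := fun t ht => by
      have := (hlsupp ht).1; linarith
    constructor
    · -- convergence of partial sums
      refine ⟨∑ t ∈ l.support, (l t * ((Lalt t : ℝ) : 𝕜)) • e, ?_⟩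
      have heq : ∀ N : ℕ, ∑ n ∈ Finset.range N, x n
          = ∑ t ∈ l.support,
              (l t * ((∑ n ∈ Finset.range N, (-1:ℝ)^n * ((n:ℝ)+1)^(-t) : ℝ) : 𝕜)) • e := by
        intro N
        rw [hxrep, Fseq_partial]
      simp only [heq]
      refine tendsto_finset_sum _ fun t ht => ?_
      exact ((((RCLike.continuous_ofReal (K := 𝕜)).tendsto _).comp
        (Lalt_spec (hpos t ht))).const_mul (l t)).smul_const e
    · -- not summable
      intro hsum
      have h1 : Summable (fun n => φ (x n)) := hsum.map (φ : X →L[𝕜] 𝕜) φ.continuous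
      have h2 : (fun n => φ (x n))
          = fun n : ℕ => ((-1:𝕜)^n * ∑ t ∈ l.support, l t * ((((n:ℝ)+1) ^ (-t) : ℝ) : 𝕜))
              * ((‖e‖ : ℝ) : 𝕜) := by
        funext n
        rw [hxrep, Fseq_sum_apply, map_smul, hφe, smul_eq_mul]
      rw [h2] at h1
      have hne' : ((‖e‖ : ℝ) : 𝕜) ≠ 0 := by
        simp only [ne_eq, RCLike.ofReal_eq_zero, norm_eq_zero]
        exact he
      have h3 := (summable_mul_right_iff hne').mp h1
      have h4 : Summable (fun n : ℕ =>
          ‖(-1:𝕜)^n * ∑ t ∈ l.support, l t * ((((n:ℝ)+1) ^ (-t) : ℝ) : 𝕜)‖) :=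
        summable_norm_iff.mpr h3
      have h5 : Summable (fun n : ℕ =>
          ‖∑ t ∈ l.support, l t * ((((n:ℝ)+1) ^ (-t) : ℝ) : 𝕜)‖) := by
        refine h4.congr fun n => ?_
        rw [norm_mul]
        simp
      exact aux_not_summable_norm l.support hlsupp l hsupp hcs h5
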